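/- Let λ be a partition into distinct parts with associated numerical set S_λ (whose complement is the set of parts of λ) and Young diagram Y = KN(S_λ). Then λ is unrefinable if and only if every hook length of a cell of Y either (a) occurs as a hook length in the first column of Y (i.e., is a part of λ), or (b) equals exactly half of the hook length of the cell in the first column of the same row. -/

import Mathlib

/-- A partition into distinct parts, encoded as a `Finset ℕ` of its parts, is *refinable*
if some part can be replaced by two or more distinct positive integers, none of which is
already a part, summing to it. -/
def Refinable (P : Finset ℕ) : Prop :=
  ∃ a ∈ P, ∃ B : Finset ℕ, 2 ≤ B.card ∧ (∀ b ∈ B, 0 < b ∧ b ∉ P) ∧ B.sum id = a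

/-- The `i`-th largest element (0-based) of `P`. -/
def partDesc (P : Finset ℕ) (i : ℕ) : ℕ := ((P.sort (· ≤ ·)).reverse).getD i 0

/-- Length of the `i`-th row (0-based) of the Young diagram obtained from the numerical
set `ℕ \ P` via the Keith–Nath transformation: the number of east steps (elements of the
numerical set) preceding the north step at the `i`-th largest gap. -/
def knRow (P : Finset ℕ) (i : ℕ) : ℕ :=
  ((Finset.range (partDesc P i)).filter (fun s => s ∉ P)).card

/-- Length of the `j`-th column (0-based) of the Keith–Nath Young diagram. -/
def knCol (P : Finset ℕ) (j : ℕ) : ℕ :=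
  ((Finset.range P.card).filter (fun i => j < knRow P i)).card

/-- Hook length of the cell `(i, j)` (0-based) of the Keith–Nath Young diagram:
arm + leg + 1. -/
def knHook (P : Finset ℕ) (i j : ℕ) : ℕ := knRow P i + knCol P j - i - j - 1

/-- Total number of cells of the Keith–Nath Young diagram. -/
def knCells (P : Finset ℕ) : ℕ := ∑ i ∈ Finset.range P.card, knRow P i

lemma partDesc_mem (P : Finset ℕ) {i : ℕ} (hi : i < P.card) : partDesc P i ∈ P := by
  have hl : i < ((P.sort (· ≤ ·)).reverse).length := by
    simpa [Finset.length_sort] using hi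
  have : partDesc P i ∈ (P.sort (· ≤ ·)).reverse := by
    rw [partDesc, List.getD_eq_getElem (hn := hl)]
    exact List.getElem_mem _
  rw [List.mem_reverse, Finset.mem_sort] at this
  exact this

lemma partDesc_anti (P : Finset ℕ) {i i' : ℕ} (h : i < i') (hi' : i' < P.card) :
    partDesc P i' < partDesc P i := by
  have hs : List.Pairwise (· > ·) ((P.sort (· ≤ ·)).reverse) :=
    List.pairwise_reverse.2 (P.sortedLT_sort).pairwise
  have hl' : i' < ((P.sort (· ≤ ·)).reverse).length := by
    simpa [Finset.length_sort] using hi'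
  have hl : i < ((P.sort (· ≤ ·)).reverse).length := lt_trans h hl'
  have := (List.pairwise_iff_get.1 hs) ⟨i, hl⟩ ⟨i', hl'⟩ h
  rw [partDesc, partDesc, List.getD_eq_getElem (hn := hl), List.getD_eq_getElem (hn := hl')]
  exact this

lemma partDesc_surj (P : Finset ℕ) {a : ℕ} (ha : a ∈ P) :
    ∃ i < P.card, partDesc P i = a := by
  have : a ∈ (P.sort (· ≤ ·)).reverse := by
    rw [List.mem_reverse, Finset.mem_sort]; exact ha
  obtain ⟨⟨i, hi⟩, hget⟩ := List.mem_iff_get.1 this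
  refine ⟨i, by simpa [Finset.length_sort] using hi, ?_⟩
  rw [partDesc, List.getD_eq_getElem (hn := hi)]
  exact hget

lemma partDesc_lt_iff (P : Finset ℕ) {i i' : ℕ} (hi : i < P.card) (hi' : i' < P.card) :
    partDesc P i' < partDesc P i ↔ i < i' := by
  constructor
  · intro h
    rcases lt_trichotomy i i' with h1 | h1 | h1
    · exact h1
    · subst h1; omega
    · exact absurd (partDesc_anti P h1 hi) (by omega)
  · intro h; exact partDesc_anti P h hi'

lemma card_filter_partDesc (P : Finset ℕ) (Q : ℕ → Prop) [DecidablePred Q] :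
    ((Finset.range P.card).filter (fun i => Q (partDesc P i))).card
      = (P.filter Q).card := by
  apply Finset.card_bij (fun i _ => partDesc P i)
  · intro i hi
    simp only [Finset.mem_filter, Finset.mem_range] at hi ⊢
    exact ⟨partDesc_mem P hi.1, hi.2⟩
  · intro i hi i' hi' h
    simp only [Finset.mem_filter, Finset.mem_range] at hi hi'
    by_contra hne
    rcases lt_or_gt_of_ne hne with h1 | h1
    · exact absurd h (ne_of_gt (partDesc_anti P h1 hi'.1))
    · exact absurd h (ne_of_lt (partDesc_anti P h1 hi.1))
  · intro a ha
    simp only [Finset.mem_filter] at ha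
    obtain ⟨i, hi, hia⟩ := partDesc_surj P ha.1
    exact ⟨i, Finset.mem_filter.2 ⟨Finset.mem_range.2 hi, (hia ▸ ha.2 : Q (partDesc P i))⟩, hia⟩

section Rest
variable (P : Finset ℕ)

lemma infP : (setOf fun s => s ∉ P).Infinite := by
  have : (setOf fun s => s ∉ P) = (↑P : Set ℕ)ᶜ := by ext x; exact Iff.rfl
  rw [this]
  exact (P.finite_toSet).infinite_compl

lemma knRow_count (i : ℕ) : knRow P i = Nat.count (fun s => s ∉ P) (partDesc P i) := by
  rw [Nat.count_eq_card_filter_range]; rfl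

lemma lt_knRow_iff {i j : ℕ} :
    j < knRow P i ↔ Nat.nth (fun s => s ∉ P) j < partDesc P i := by
  rw [knRow_count]
  constructor
  · exact Nat.nth_lt_of_lt_count
  · intro h
    by_contra hc
    push_neg at hc
    exact absurd ((Nat.count_le_iff_le_nth (infP P)).1 hc) (not_le.2 h)

lemma count_split (m : ℕ) :
    Nat.count (fun s => s ∉ P) m + (P.filter (· < m)).card = m := by
  rw [Nat.count_eq_card_filter_range]
  have h2 : (P.filter (· < m)).card = ((Finset.range m).filter (fun s => s ∈ P)).card := by
    congr 1
    ext x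
    simp [Finset.mem_filter, Finset.mem_range, and_comm]
  rw [h2]
  have := Finset.card_filter_add_card_filter_not (s := Finset.range m)
    (p := fun s => s ∉ P)
  simp only [not_not] at this
  rw [this, Finset.card_range]

lemma parts_lt_card {i : ℕ} (hi : i < P.card) :
    (P.filter (· < partDesc P i)).card = P.card - 1 - i := by
  have h1 : (P.filter (· < partDesc P i)).card
      = ((Finset.range P.card).filter (fun i' => partDesc P i' < partDesc P i)).card :=
    (card_filter_partDesc P (· < partDesc P i)).symm
  have h2 : ((Finset.range P.card).filter (fun i' => partDesc P i' < partDesc P i))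
      = (Finset.range P.card).filter (fun i' => i < i') := by
    apply Finset.filter_congr
    intro i' hi'
    simp only [Finset.mem_range] at hi'
    simp [partDesc_lt_iff P hi hi']
  rw [h1, h2]
  have h3 : (Finset.range P.card).filter (fun i' => i < i')
      = Finset.Ico (i + 1) P.card := by
    ext x; simp [Finset.mem_filter, Finset.mem_range, Finset.mem_Ico]; omega
  rw [h3, Nat.card_Ico]
  omega

lemma knRow_eq {i : ℕ} (hi : i < P.card) :
    knRow P i + (P.card - 1 - i) = partDesc P i := by
  rw [knRow_count, ← parts_lt_card P hi]
  exact count_split P _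

lemma knCol_eq (j : ℕ) :
    knCol P j = (P.filter (fun q => Nat.nth (fun s => s ∉ P) j < q)).card := by
  rw [knCol, ← card_filter_partDesc P (fun q => Nat.nth (fun s => s ∉ P) j < q)]
  congr 1
  apply Finset.filter_congr
  intro i' _
  simp [lt_knRow_iff P]

lemma nth_parts_lt (j : ℕ) :
    (P.filter (· < Nat.nth (fun s => s ∉ P) j)).card + j = Nat.nth (fun s => s ∉ P) j := by
  have h := count_split P (Nat.nth (fun s => s ∉ P) j)
  rw [Nat.count_nth_of_infinite (infP P) j] at h
  omega

lemma knCol_val (j : ℕ) :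
    knCol P j + (Nat.nth (fun s => s ∉ P) j - j) = P.card := by
  have hsP : Nat.nth (fun s => s ∉ P) j ∉ P := Nat.nth_mem_of_infinite (infP P) j
  have hsplit := Finset.card_filter_add_card_filter_not (s := P)
    (p := (· < Nat.nth (fun s => s ∉ P) j))
  have hfe : (P.filter (fun a => ¬ a < Nat.nth (fun s => s ∉ P) j))
      = P.filter (fun q => Nat.nth (fun s => s ∉ P) j < q) := by
    ext q
    simp only [Finset.mem_filter, not_lt]
    constructor
    · rintro ⟨hq, hle⟩
      exact ⟨hq, lt_of_le_of_ne hle (fun h => hsP (h.symm ▸ hq))⟩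
    · rintro ⟨hq, hlt⟩
      exact ⟨hq, hlt.le⟩
  rw [hfe] at hsplit
  have h2 := nth_parts_lt P j
  rw [knCol_eq]
  omega

lemma knHook_eq {i j : ℕ} (hi : i < P.card) (hj : j < knRow P i) :
    knHook P i j = partDesc P i - Nat.nth (fun s => s ∉ P) j := by
  have h1 := knRow_eq P hi
  have h2 := knCol_val P j
  have h3 : Nat.nth (fun s => s ∉ P) j < partDesc P i := (lt_knRow_iff P).1 hj
  have h4 := nth_parts_lt P j
  rw [knHook]
  omega

lemma nth_zero_P (hpos : ∀ p ∈ P, 0 < p) : Nat.nth (fun s => s ∉ P) 0 = 0 :=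
  Nat.nth_zero_of_zero (fun h => by have := hpos 0 h; omega)

lemma knRow_pos (hpos : ∀ p ∈ P, 0 < p) {i : ℕ} (hi : i < P.card) : 0 < knRow P i := by
  rw [lt_knRow_iff P, nth_zero_P P hpos]
  exact hpos _ (partDesc_mem P hi)

lemma knHook_zero (hpos : ∀ p ∈ P, 0 < p) {i : ℕ} (hi : i < P.card) :
    knHook P i 0 = partDesc P i := by
  rw [knHook_eq P hi (knRow_pos P hpos hi), nth_zero_P P hpos]
  omega

end Rest

lemma viol_of_sum (P : Finset ℕ) :
    ∀ a, a ∈ P → ∀ B : Finset ℕ, 2 ≤ B.card → (∀ b ∈ B, 0 < b ∧ b ∉ P) →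
      B.sum id = a →
      ∃ a' ∈ P, ∃ s, s ∉ P ∧ s < a' ∧ a' - s ∉ P ∧ 2 * (a' - s) ≠ a' := by
  intro a
  induction a using Nat.strong_induction_on with
  | _ a IH =>
  intro haP B hBcard hBmem hBsum
  -- find b ∈ B with 2 * b ≠ a
  obtain ⟨b1, hb1, b2, hb2, hne⟩ := Finset.one_lt_card.1 (show 1 < B.card by omega)
  obtain ⟨b, hb, h2b⟩ : ∃ b ∈ B, 2 * b ≠ a := by
    by_cases h : 2 * b1 = a
    · exact ⟨b2, hb2, fun h2 => hne (by omega)⟩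
    · exact ⟨b1, hb1, h⟩
  have hsum_erase : (B.erase b).sum id + b = a := by
    have h := Finset.sum_erase_add B id hb
    rw [hBsum] at h
    exact h
  have herase_card : (B.erase b).card = B.card - 1 := Finset.card_erase_of_mem hb
  have herase_pos : 0 < (B.erase b).sum id := by
    obtain ⟨b'', hb''⟩ := Finset.card_pos.1 (by omega : 0 < (B.erase b).card)
    have h1 : 0 < b'' := (hBmem b'' (Finset.mem_of_mem_erase hb'')).1
    calc 0 < b'' := h1
      _ ≤ (B.erase b).sum id := Finset.single_le_sum (fun x _ => Nat.zero_le x) hb''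
  have hba : b < a := by omega
  have hbP := hBmem b hb
  by_cases hc : a - b ∈ P
  · -- recurse on c = a - b
    have hcval : (B.erase b).sum id = a - b := by omega
    rcases Nat.lt_or_ge (B.erase b).card 2 with h1 | h1
    · -- erase has one element b', which equals a - b ∈ P, contradiction
      obtain ⟨b', hb'⟩ := Finset.card_eq_one.1 (show (B.erase b).card = 1 by omega)
      have hb'B : b' ∈ B := Finset.mem_of_mem_erase (hb' ▸ Finset.mem_singleton_self b')
      have : b' = a - b := by
        have := hcval
        rw [hb', Finset.sum_singleton] at this
        exact this
      exact absurd (this ▸ hc) (hBmem b' hb'B).2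
    · exact IH (a - b) (by omega) hc (B.erase b) h1
        (fun x hx => hBmem x (Finset.mem_of_mem_erase hx)) hcval
  · exact ⟨a, haP, b, hbP.2, hba, hc, by omega⟩

/-- Geometric criterion for unrefinability: a partition into distinct parts is unrefinable
iff every hook length of the Keith–Nath Young diagram of its numerical set either is a
part of the partition (i.e. occurs in the first column), or equals half the hook length
of the first-column cell in the same row. -/
theorem stmt6 (P : Finset ℕ) (hpos : ∀ p ∈ P, 0 < p) (hcard : 2 ≤ P.card) :
    ¬ Refinable P ↔
      (∀ i j : ℕ, i < P.card → j < knRow P i →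
        (knHook P i j ∈ P ∨ 2 * knHook P i j = knHook P i 0)) := by
  have key : Refinable P ↔
      ∃ a ∈ P, ∃ s, s ∉ P ∧ s < a ∧ a - s ∉ P ∧ 2 * (a - s) ≠ a := by
    constructor
    · rintro ⟨a, haP, B, hBcard, hBmem, hBsum⟩
      exact viol_of_sum P a haP B hBcard hBmem hBsum
    · rintro ⟨a, haP, s, hsP, hsa, hasP, has2⟩
      have hs0 : 0 < s := by
        rcases Nat.eq_zero_or_pos s with h | h
        · exfalso; subst h; simp only [Nat.sub_zero] at hasP; exact hasP haP
        · exact h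
      refine ⟨a, haP, {s, a - s}, ?_, ?_, ?_⟩
      · rw [Finset.card_insert_of_notMem (by simp only [Finset.mem_singleton]; omega),
          Finset.card_singleton]
      · intro b hb
        simp only [Finset.mem_insert, Finset.mem_singleton] at hb
        rcases hb with h | h <;> subst h
        · exact ⟨hs0, hsP⟩
        · exact ⟨by omega, hasP⟩
      · rw [Finset.sum_insert (by simp only [Finset.mem_singleton]; omega),
          Finset.sum_singleton]
        simp only [id]
        omega
  constructor
  · intro hnr i j hi hj
    have hhook := knHook_eq P hi hj
    have hzero := knHook_zero P hpos hi
    have hsP : (Nat.nth (fun s => s ∉ P) j) ∉ P := Nat.nth_mem_of_infinite (infP P) j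
    have hsa : Nat.nth (fun s => s ∉ P) j < partDesc P i := (lt_knRow_iff P).1 hj
    have haP : partDesc P i ∈ P := partDesc_mem P hi
    rw [hhook, hzero]
    by_contra hcon
    push_neg at hcon
    exact hnr (key.2 ⟨partDesc P i, haP, Nat.nth (fun s => s ∉ P) j, hsP, hsa,
      hcon.1, hcon.2⟩)
  · intro hgeo
    rw [key]
    rintro ⟨a, haP, s, hsP, hsa, h1, h2⟩
    obtain ⟨i, hi, hia⟩ := partDesc_surj P haP
    have hnth : Nat.nth (fun s => s ∉ P) (Nat.count (fun s => s ∉ P) s) = s :=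
      Nat.nth_count hsP
    have hj : Nat.count (fun s => s ∉ P) s < knRow P i := by
      rw [lt_knRow_iff P, hnth, hia]
      exact hsa
    have hg := hgeo i _ hi hj
    rw [knHook_eq P hi hj, hnth, hia, knHook_zero P hpos hi, hia] at hg
    rcases hg with hg | hg
    · exact h1 hg
    · exact h2 hg
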